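/- Let $a,b$ be as above with $\int_{\mathbb{R}} m<\infty$, and suppose the entrance boundary condition at $+\infty$ fails, i.e. $\int_0^{\infty} m(x)\int_0^x s(y)\,dy\,dx = \infty$. Then for every $x\in\mathbb{R}$, $\int_x^{\infty}\mu(y)\,u_{y,-}(x)\,dy = \infty$, where $u_{y,-}(x)=2\int_x^y s(z)\int_{-\infty}^z m(w)\,dw\,dz$ and $\mu = m/\int m$. -/

import Mathlib

open MeasureTheory Set

/-- If the entrance-boundary condition at `+∞` fails, the averaged expected
hitting time from any starting point is infinite. -/
theorem stmt9 (a b B m s μ : ℝ → ℝ)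
    (ha : Continuous a) (hapos : ∀ x, 0 < a x) (hbc : Continuous b)
    (hB : ∀ x, B x = ∫ t in (0:ℝ)..x, b t / a t)
    (hm : ∀ x, m x = (a x)⁻¹ * Real.exp (2 * B x))
    (hs : ∀ x, s x = Real.exp (-(2 * B x)))
    (hmint : Integrable m)
    (hμ : ∀ x, μ x = m x / ∫ w, m w)
    (hfail : ¬ IntegrableOn (fun x => m x * ∫ t in (0:ℝ)..x, s t) (Ioi 0)) :
    ∀ x : ℝ,
      ¬ IntegrableOn
        (fun y => μ y * (2 * ∫ z in x..y, s z * ∫ w in Iio z, m w)) (Ioi x) := by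
  intro x
  have hane : ∀ t, a t ≠ 0 := fun t => (hapos t).ne'
  have hBc : Continuous B := by
    have h1 : Continuous fun t => b t / a t := hbc.div ha hane
    rw [show B = fun x => ∫ t in (0:ℝ)..x, b t / a t from funext hB]
    exact intervalIntegral.continuous_primitive
      (fun u v => h1.intervalIntegrable u v) (0 : ℝ)
  have hmc : Continuous m := by
    rw [show m = fun x => (a x)⁻¹ * Real.exp (2 * B x) from funext hm]
    exact (ha.inv₀ hane).mul ((continuous_const.mul hBc).rexp)
  have hmpos : ∀ y, 0 < m y := fun y => by
    have := hapos y
    rw [hm]; positivity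
  have hsc : Continuous s := by
    rw [show s = fun x => Real.exp (-(2 * B x)) from funext hs]
    exact ((continuous_const.mul hBc).neg).rexp
  have hspos : ∀ y, 0 < s y := fun y => by
    rw [hs]; positivity
  have hmnn : 0 ≤ᵐ[volume] m := Filter.Eventually.of_forall fun y => (hmpos y).le
  -- total mass positive
  have hI : 0 < ∫ w, m w := by
    rw [integral_pos_iff_support_of_nonneg_ae hmnn hmint]
    have hsupp : Function.support m = univ := eq_univ_of_forall fun y => (hmpos y).ne'
    simp [hsupp]
  set F : ℝ → ℝ := fun z => ∫ w in Iio z, m w with hF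
  have hFnn : ∀ z, 0 ≤ F z := fun z =>
    setIntegral_nonneg measurableSet_Iio fun w _ => (hmpos w).le
  have hFx : 0 < F x := by
    rw [hF]
    rw [setIntegral_pos_iff_support_of_nonneg_ae
      (ae_restrict_of_ae hmnn) hmint.integrableOn]
    have hsupp : Function.support m = univ := eq_univ_of_forall fun y => (hmpos y).ne'
    simp [hsupp]
  have hFmono : Monotone F := fun z₁ z₂ hz =>
    setIntegral_mono_set hmint.integrableOn (ae_restrict_of_ae hmnn)
      (HasSubset.Subset.eventuallyLE (Iio_subset_Iio hz))
  -- continuity of F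
  have hFeq : ∀ z, F z = (∫ w in Iic (0:ℝ), m w) + ∫ w in (0:ℝ)..z, m w := by
    intro z
    have h1 : (∫ w in Iic z, m w) - ∫ w in Iic (0:ℝ), m w = ∫ w in (0:ℝ)..z, m w :=
      intervalIntegral.integral_Iic_sub_Iic hmint.integrableOn hmint.integrableOn
    have h2 : F z = ∫ w in Iic z, m w :=
      setIntegral_congr_set (Iio_ae_eq_Iic)
    linarith
  have hFc : Continuous F := by
    rw [show F = fun z => (∫ w in Iic (0:ℝ), m w) + ∫ w in (0:ℝ)..z, m w from funext hFeq]
    exact continuous_const.add (intervalIntegral.continuous_primitive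
      (fun u v => hmc.intervalIntegrable u v) (0 : ℝ))
  -- primitive of s
  have hprim : Continuous fun y => ∫ t in x..y, s t :=
    intervalIntegral.continuous_primitive (fun u v => hsc.intervalIntegrable u v) x
  have hprim0 : Continuous fun y => ∫ t in (0:ℝ)..y, s t :=
    intervalIntegral.continuous_primitive (fun u v => hsc.intervalIntegrable u v) (0:ℝ)
  -- step A: non-integrability from any starting point
  have notg0x : ¬ IntegrableOn (fun y => m y * ∫ t in (0:ℝ)..y, s t) (Ioi x) := by
    intro hcontra
    apply hfail
    rcases le_or_gt x 0 with hx | hx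
    · exact hcontra.mono_set (Ioi_subset_Ioi hx)
    · have hcompact : IntegrableOn (fun y => m y * ∫ t in (0:ℝ)..y, s t) (Ioc 0 x) := by
        apply Continuous.integrableOn_Ioc
        exact hmc.mul hprim0
      have := hcompact.union hcontra
      rwa [Ioc_union_Ioi_eq_Ioi hx.le] at this
  -- step B: shift the base point of the scale integral
  have notgx : ¬ IntegrableOn (fun y => m y * ∫ t in x..y, s t) (Ioi x) := by
    intro hgx
    apply notg0x
    have heq : ∀ y, m y * ∫ t in (0:ℝ)..y, s t
        = (∫ t in (0:ℝ)..x, s t) * m y + m y * ∫ t in x..y, s t := by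
      intro y
      have h3 : (∫ t in (0:ℝ)..x, s t) + ∫ t in x..y, s t = ∫ t in (0:ℝ)..y, s t :=
        intervalIntegral.integral_add_adjacent_intervals
          (hsc.intervalIntegrable 0 x) (hsc.intervalIntegrable x y)
      rw [← h3]; ring
    simp only [heq]
    exact ((hmint.integrableOn).const_mul _).add hgx
  -- step C: conclude
  intro hcon
  apply notgx
  set c : ℝ := 2 * F x / (∫ w, m w) with hc
  have hcpos : 0 < c := by positivity
  have hbound : ∀ᵐ y ∂(volume.restrict (Ioi x)),
      ‖c * (m y * ∫ t in x..y, s t)‖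
        ≤ ‖μ y * (2 * ∫ z in x..y, s z * ∫ w in Iio z, m w)‖ := by
    refine (ae_restrict_mem measurableSet_Ioi).mono fun y hy => ?_
    have hxy : x ≤ y := le_of_lt hy
    have hCnn : 0 ≤ ∫ t in x..y, s t :=
      intervalIntegral.integral_nonneg hxy fun t _ => (hspos t).le
    have hJ : F x * ∫ t in x..y, s t ≤ ∫ z in x..y, s z * F z := by
      have h4 : ∫ z in x..y, s z * F x ≤ ∫ z in x..y, s z * F z :=
        intervalIntegral.integral_mono_on hxy
          ((hsc.mul continuous_const).intervalIntegrable x y)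
          ((hsc.mul hFc).intervalIntegrable x y)
          (fun z hz => mul_le_mul_of_nonneg_left (hFmono hz.1) (hspos z).le)
      have h5 : ∫ z in x..y, s z * F x = (∫ z in x..y, s z) * F x :=
        intervalIntegral.integral_mul_const _ _
      rw [h5] at h4
      linarith [h4]
    have hhy : 0 ≤ c * (m y * ∫ t in x..y, s t) := by
      have := (hmpos y).le
      positivity
    have hle : c * (m y * ∫ t in x..y, s t)
        ≤ μ y * (2 * ∫ z in x..y, s z * ∫ w in Iio z, m w) := by
      rw [hμ, hc]
      have hmInn : 0 ≤ m y / ∫ w, m w := div_nonneg (hmpos y).le hI.le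
      have e1 : 2 * F x / (∫ w, m w) * (m y * ∫ t in x..y, s t)
          = (m y / ∫ w, m w) * (2 * (F x * ∫ t in x..y, s t)) := by ring
      rw [e1]
      exact mul_le_mul_of_nonneg_left (by linarith [hJ]) hmInn
    have hfnn : 0 ≤ μ y * (2 * ∫ z in x..y, s z * ∫ w in Iio z, m w) :=
      le_trans hhy hle
    rw [Real.norm_eq_abs, Real.norm_eq_abs, abs_of_nonneg hhy, abs_of_nonneg hfnn]
    exact hle
  have hmeas : AEStronglyMeasurable (fun y => c * (m y * ∫ t in x..y, s t))
      (volume.restrict (Ioi x)) :=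
    (continuous_const.mul (hmc.mul hprim)).aestronglyMeasurable
  have hh : IntegrableOn (fun y => c * (m y * ∫ t in x..y, s t)) (Ioi x) :=
    Integrable.mono hcon hmeas hbound
  have hcne : c ≠ 0 := hcpos.ne'
  have := hh.const_mul c⁻¹
  simpa only [IntegrableOn, inv_mul_cancel_left₀ hcne] using this
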